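/- The meet of two digitally convex words of the same length (with respect to the dominance order) is digitally convex. -/

import Mathlib

/-- A word is primitive if it is not a proper power: `w = v^n` implies `n = 1`. -/
def Primitive {α : Type*} (w : List α) : Prop :=
  ∀ (v : List α) (n : ℕ), w = (List.replicate n v).flatten → n = 1

/-- A Lyndon word: nonempty and lexicographically strictly smaller than all
its proper nonempty suffixes. -/
def Lyndon {α : Type*} [LinearOrder α] (w : List α) : Prop :=
  w ≠ [] ∧ ∀ u v : List α, w = u ++ v → u ≠ [] → v ≠ [] → List.Lex (· < ·) w v

/-- A Lyndon word for the reversed order `1 < 0` on `Bool`. -/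
def LyndonRev (w : List Bool) : Prop :=
  w ≠ [] ∧ ∀ u v : List Bool, w = u ++ v → u ≠ [] → v ≠ [] → List.Lex (· > ·) w v

/-- A binary word is balanced if the numbers of `1`s in any two factors of the
same length differ by at most 1. (`false` plays the role of `0`, `true` of `1`.) -/
def Balanced01 (w : List Bool) : Prop :=
  ∀ u v : List Bool, u <:+: w → v <:+: w → u.length = v.length →
    (u.count true : ℤ) - (v.count true : ℤ) ≤ 1

/-- `w` has period `p`: `w[i] = w[i+p]` for all valid indices. -/
def HasPeriod (w : List Bool) (p : ℕ) : Prop :=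
  ∀ i : ℕ, i + p < w.length → w[i]? = w[i + p]?

/-- A central word: it has coprime periods `p`, `q` and length `p + q - 2`. -/
def Central (w : List Bool) : Prop :=
  ∃ p q : ℕ, Nat.Coprime p q ∧ HasPeriod w p ∧ HasPeriod w q ∧ w.length + 2 = p + q

/-- The lower Christoffel word of slope `b/a`: letter `i` is `1` (`true`) iff the
line `y = bx/(a+b)`... encoded via floor differences `⌊(i+1)b/(a+b)⌋ - ⌊ib/(a+b)⌋`. -/
def chr (a b : ℕ) : List Bool :=
  List.ofFn (fun i : Fin (a + b) =>
    decide ((i : ℕ) * b / (a + b) < ((i : ℕ) + 1) * b / (a + b)))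

/-- An (upward) digitally convex word: all factors of its Lyndon factorization
(for the order `0 < 1`) are balanced Lyndon words, i.e. primitive lower
Christoffel words. -/
def DC (w : List Bool) : Prop :=
  ∃ L : List (List Bool), L.flatten = w ∧ (∀ x ∈ L, Lyndon x ∧ Balanced01 x) ∧
    L.Chain' (fun a b => ¬ List.Lex (· < ·) a b)

/-- A downward digitally convex word: all factors of its Lyndon factorization
for the order `1 < 0` are balanced. -/
def DCdown (w : List Bool) : Prop :=
  ∃ L : List (List Bool), L.flatten = w ∧ (∀ x ∈ L, LyndonRev x ∧ Balanced01 x) ∧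
    L.Chain' (fun a b => ¬ List.Lex (· > ·) a b)

/-- `(u, v)` is the standard factorization of `u ++ v`: both parts nonempty and
`v` is the lexicographically least proper nonempty suffix of `u ++ v`. -/
def StdFact (u v : List Bool) : Prop :=
  u ≠ [] ∧ v ≠ [] ∧
    ∀ s : List Bool, s ≠ [] → s ≠ u ++ v → s <:+ u ++ v →
      s = v ∨ List.Lex (· < ·) v s

/-- A word is unbordered if it has no nonempty proper border. -/
def Unbordered (w : List Bool) : Prop :=
  ∀ u : List Bool, u <+: w → u <:+ w → u ≠ w → u = []


namespace S16

/-- number of `true`s among the first `j` letters -/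
def cnt (w : List Bool) (j : ℕ) : ℕ := (w.take j).count true

@[simp] lemma cnt_zero (w : List Bool) : cnt w 0 = 0 := rfl

@[simp] lemma cnt_nil (j : ℕ) : cnt [] j = 0 := by simp [cnt]

lemma cnt_cons (c : Bool) (x : List Bool) (j : ℕ) :
    cnt (c :: x) (j + 1) = (if c then 1 else 0) + cnt x j := by
  rcases c <;> simp [cnt, List.count_cons, Nat.add_comm]

lemma cnt_add (w : List Bool) (i t : ℕ) :
    cnt w (i + t) = cnt w i + cnt (w.drop i) t := by
  rw [cnt, cnt, cnt, List.take_add, List.count_append]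

lemma cnt_mono (w : List Bool) {i j : ℕ} (h : i ≤ j) : cnt w i ≤ cnt w j := by
  obtain ⟨t, rfl⟩ := Nat.exists_eq_add_of_le h
  rw [cnt_add]; omega

lemma cnt_le (w : List Bool) (j : ℕ) : cnt w j ≤ j := by
  calc cnt w j ≤ (w.take j).length := List.count_le_length
  _ ≤ j := by simp

lemma cnt_of_le (w : List Bool) {j : ℕ} (h : w.length ≤ j) :
    cnt w j = cnt w w.length := by
  rw [cnt, cnt, List.take_of_length_le h, List.take_length]

lemma cnt_succ (w : List Bool) {t : ℕ} (h : t < w.length) :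
    cnt w (t + 1) = cnt w t + (if w[t] then 1 else 0) := by
  rw [cnt_add]
  congr 1
  rw [List.drop_eq_getElem_cons h]
  rcases hb : w[t] with _ | _ <;> simp [cnt, hb, List.count_cons]

lemma cnt_take (w : List Bool) (k j : ℕ) (h : j ≤ k) :
    cnt (w.take k) j = cnt w j := by
  rw [cnt, cnt, List.take_take, min_eq_left h]

lemma cnt_len (w : List Bool) : cnt w w.length = w.count true := by
  rw [cnt, List.take_length]

lemma cnt_append (x y : List Bool) (j : ℕ) :
    cnt (x ++ y) j = cnt x j + cnt y (j - x.length) := by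
  rcases le_or_gt j x.length with h | h
  · rw [cnt, List.take_append, List.count_append]
    have h1 : j - x.length = 0 := by omega
    rw [h1]; rfl
  · have h2 : j = x.length + (j - x.length) := by omega
    rw [cnt_of_le x (by omega)]
    conv_lhs => rw [h2]
    rw [cnt_add, List.drop_left]
    congr 1
    rw [cnt, List.take_left, cnt, List.take_length]

/-- words with the same length and the same prefix-count functions agree -/
lemma eq_of_cnt : ∀ (x y : List Bool), x.length = y.length →
    (∀ j, j ≤ x.length → cnt x j = cnt y j) → x = y := by
  intro x
  induction x with
  | nil => intro y h _; exact (List.length_eq_zero_iff.mp h.symm).symm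
  | cons a x ih =>
    intro y h hc
    cases y with
    | nil => simp at h
    | cons b y =>
      have h1 := hc 1 (by simp)
      rw [show (1:ℕ) = 0 + 1 by rfl, cnt_cons, cnt_cons] at h1
      have hab : a = b := by rcases a <;> rcases b <;> simp_all
      subst hab
      have : x = y := by
        apply ih y (by simpa using h)
        intro j hj
        have := hc (j+1) (by simpa using Nat.succ_le_succ hj)
        rw [cnt_cons, cnt_cons] at this
        omega
      rw [this]

lemma bool_lt {a b : Bool} (h : a < b) : a = false ∧ b = true := by
  rcases a <;> rcases b <;> first | exact ⟨rfl, rfl⟩ | exact absurd h (by decide)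

/-- structure of a lexicographic comparison: prefix, or first difference -/
lemma lex_struct {x y : List Bool} (h : List.Lex (· < ·) x y) :
    (x <+: y) ∨ ∃ d, d < x.length ∧ d < y.length ∧ x.take d = y.take d ∧
      x[d]! = false ∧ y[d]! = true := by
  induction h with
  | nil => exact Or.inl (List.nil_prefix)
  | @rel a l₁ b l₂ hab =>
    right
    obtain ⟨ha, hb⟩ := bool_lt hab
    exact ⟨0, by simp, by simp, rfl, by simp [ha], by simp [hb]⟩
  | @cons a l₁ l₂ _ ih =>
    rcases ih with hp | ⟨d, h1, h2, h3, h4, h5⟩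
    · exact Or.inl (List.cons_prefix_cons.mpr ⟨rfl, hp⟩)
    · right
      exact ⟨d+1, by simpa using h1, by simpa using h2, by simp [h3],
        by simpa using h4, by simpa using h5⟩

lemma not_lex_of_prefix : ∀ {x y : List Bool}, y <+: x → ¬ List.Lex (· < ·) x y := by
  intro x y hp hl
  induction hl with
  | nil => simp at hp
  | @rel a l₁ b l₂ hab =>
    rw [List.cons_prefix_cons] at hp
    obtain ⟨rfl, -⟩ := hp
    exact absurd hab (lt_irrefl _)
  | @cons a l₁ l₂ _ ih => exact ih (List.cons_prefix_cons.mp hp).2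

/-- lexicographic comparison from count functions -/
lemma lexA : ∀ (x y : List Bool),
    (∀ j, j ≤ x.length → j ≤ y.length → cnt x j ≤ cnt y j) →
    (x.length < y.length ∨ ∃ j, j ≤ x.length ∧ j ≤ y.length ∧ cnt x j < cnt y j) →
    List.Lex (· < ·) x y := by
  intro x
  induction x with
  | nil =>
    intro y _ hs
    cases y with
    | nil =>
      rcases hs with h | ⟨j, hj, _, hlt⟩
      · simp at h
      · obtain rfl : j = 0 := by simpa using hj
        simp at hlt
    | cons b y => exact List.Lex.nil
  | cons a x ih =>
    intro y hle hs
    cases y with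
    | nil =>
      rcases hs with h | ⟨j, hj, hj2, hlt⟩
      · simp at h
      · obtain rfl : j = 0 := by simpa using hj2
        simp at hlt
    | cons b y =>
      have h1 := hle 1 (by simp) (by simp)
      rw [show (1:ℕ) = 0 + 1 by rfl, cnt_cons, cnt_cons] at h1
      have step : (a = b) → List.Lex (· < ·) (a :: x) (b :: y) := by
        intro hab
        subst hab
        apply List.Lex.cons
        apply ih
        · intro j hj hj2
          have := hle (j+1) (by simpa using Nat.succ_le_succ hj)
            (by simpa using Nat.succ_le_succ hj2)
          rw [cnt_cons, cnt_cons] at this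
          omega
        · rcases hs with h | ⟨j, hj, hj2, hlt⟩
          · left; simpa using h
          · rcases Nat.eq_zero_or_pos j with rfl | hj0
            · simp at hlt
            · right
              obtain ⟨j', rfl⟩ : ∃ j', j = j' + 1 := ⟨j - 1, by omega⟩
              refine ⟨j', by simp at hj; omega, by simp at hj2; omega, ?_⟩
              rw [cnt_cons, cnt_cons] at hlt
              omega
      rcases a <;> rcases b
      · exact step rfl
      · exact List.Lex.rel (by decide)
      · simp at h1
      · exact step rfl

/-- ¬lex from count domination -/
lemma lexB : ∀ (x y : List Bool),
    (∀ j, j ≤ x.length → j ≤ y.length → cnt y j ≤ cnt x j) →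
    (x.length ≤ y.length → cnt y x.length < cnt x x.length) →
    ¬ List.Lex (· < ·) x y := by
  intro x
  induction x with
  | nil =>
    intro y _ hs hl
    have := hs (by simp)
    simp at this
  | cons a x ih =>
    intro y hle hs hl
    cases y with
    | nil => cases hl
    | cons b y =>
      have h1 := hle 1 (by simp) (by simp)
      rw [show (1:ℕ) = 0 + 1 by rfl, cnt_cons, cnt_cons] at h1
      cases hl with
      | rel hab =>
        obtain ⟨rfl, rfl⟩ := bool_lt hab
        simp at h1
      | cons hl' =>
        refine ih y ?_ ?_ hl'
        · intro j hj hj2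
          have := hle (j+1) (by simpa using Nat.succ_le_succ hj)
            (by simpa using Nat.succ_le_succ hj2)
          rw [cnt_cons, cnt_cons] at this
          omega
        · intro hlen
          have := hs (by simpa using Nat.succ_le_succ hlen)
          rw [List.length_cons, cnt_cons, cnt_cons] at this
          omega

end S16


namespace S16

/-- structure of a lexicographic comparison: prefix, or first difference -/
lemma lex_struct' {x y : List Bool} (h : List.Lex (· < ·) x y) :
    (x <+: y) ∨ ∃ d, ∃ (h1 : d < x.length) (h2 : d < y.length),
      x.take d = y.take d ∧ x[d] = false ∧ y[d] = true := by
  induction h with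
  | nil => exact Or.inl (List.nil_prefix)
  | @rel a l₁ b l₂ hab =>
    right
    obtain ⟨ha, hb⟩ := bool_lt hab
    exact ⟨0, by simp, by simp, rfl, by simpa using ha, by simpa using hb⟩
  | @cons a l₁ l₂ _ ih =>
    rcases ih with hp | ⟨d, h1, h2, h3, h4, h5⟩
    · exact Or.inl (List.cons_prefix_cons.mpr ⟨rfl, hp⟩)
    · right
      exact ⟨d+1, by simpa using h1, by simpa using h2, by simp [h3],
        by simpa using h4, by simpa using h5⟩

/-- the balance cap: any window exceeds any other window of the same length by at most 1 -/
lemma cap {w : List Bool} (hB : Balanced01 w) {i i' l : ℕ}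
    (h1 : i + l ≤ w.length) (h2 : i' + l ≤ w.length) :
    cnt w (i + l) + cnt w i' ≤ cnt w i + cnt w (i' + l) + 1 := by
  have hinf : ∀ a : ℕ, a + l ≤ w.length → (w.drop a).take l <:+: w := by
    intro a _
    refine ⟨w.take a, w.drop (a + l), ?_⟩
    have h3 : (w.drop a).take l ++ w.drop (a + l) = w.drop a := by
      have := List.take_append_drop l (w.drop a)
      rwa [List.drop_drop] at this
    rw [List.append_assoc, h3, List.take_append_drop]
  have hlen : ∀ a : ℕ, a + l ≤ w.length → ((w.drop a).take l).length = l := by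
    intro a ha; simp; omega
  have hcnt : ∀ a : ℕ, ((w.drop a).take l).count true = cnt (w.drop a) l := fun _ => rfl
  have hb := hB _ _ (hinf i h1) (hinf i' h2) (by rw [hlen i h1, hlen i' h2])
  rw [hcnt, hcnt] at hb
  have e1 := cnt_add w i l
  have e2 := cnt_add w i' l
  omega

variable {x : List Bool}

lemma lyndon_pos (hL : Lyndon x) : 0 < x.length := List.length_pos_iff.mpr hL.1

/-- first difference between a Lyndon word and its proper suffix, count form -/
lemma lyndon_struct (hL : Lyndon x) {i : ℕ} (hi1 : 1 ≤ i) (hi2 : i < x.length) :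
    ∃ d, i + d < x.length ∧ cnt x (d+1) = cnt x d ∧
      (∀ t, t ≤ d → cnt (x.drop i) t = cnt x t) ∧
      cnt (x.drop i) (d+1) = cnt x d + 1 := by
  have hlex : List.Lex (· < ·) x (x.drop i) := by
    apply hL.2 (x.take i) (x.drop i) (List.take_append_drop _ _).symm
    · exact List.ne_nil_of_length_pos (by rw [List.length_take]; omega)
    · exact List.ne_nil_of_length_pos (by rw [List.length_drop]; omega)
  rcases lex_struct' hlex with hp | ⟨d, h1, h2, h3, h4, h5⟩
  · exfalso
    have := hp.length_le
    simp at this; omega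
  · have h2' : d < x.length - i := by simpa using h2
    have hDt : ∀ t, t ≤ d → cnt (x.drop i) t = cnt x t := by
      intro t ht
      have : x.take t = (x.drop i).take t := by
        have := congrArg (List.take t) h3
        rwa [List.take_take, List.take_take, min_eq_left ht] at this
      rw [cnt, cnt, this]
    refine ⟨d, by omega, ?_, hDt, ?_⟩
    · rw [cnt_succ x h1, h4]; simp
    · rw [cnt_succ _ h2, h5, hDt d le_rfl]; simp

/-- window minimality: every window contains at least as many 1s as the prefix -/
lemma wmin (hL : Lyndon x) (hB : Balanced01 x) :
    ∀ i l, i + l ≤ x.length → cnt x i + cnt x l ≤ cnt x (i + l) := by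
  intro i l hil
  rcases Nat.eq_zero_or_pos i with rfl | hi
  · simp
  rcases Nat.eq_zero_or_pos l with rfl | hl
  · simp
  have him : i < x.length := by omega
  obtain ⟨d, hd, hcd, hDt, hDd1⟩ := lyndon_struct hL hi him
  have hadd : ∀ t, cnt x (i + t) = cnt x i + cnt (x.drop i) t := fun t => cnt_add x i t
  rcases le_or_gt l d with hld | hdl
  · have h1 := hadd l
    have h2 := hDt l hld
    omega
  · obtain ⟨l₁, rfl⟩ : ∃ l₁, l = d + 1 + l₁ := ⟨l - (d+1), by omega⟩
    have hc := cap hB (i := d+1) (i' := i + (d+1)) (l := l₁)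
      (by omega) (by omega)
    have e1 : cnt x (i + (d+1)) = cnt x i + cnt (x.drop i) (d+1) := hadd (d+1)
    have e2 : cnt x (i + (d+1) + l₁) = cnt x (i + (d+1+l₁)) := by rw [Nat.add_assoc]
    have e3 : cnt x (i + (d+1+l₁)) = cnt x i + cnt (x.drop i) (d+1+l₁) := hadd _
    have e5 : cnt (x.drop i) (d+1) = cnt x d + 1 := hDd1
    have e6 : cnt x (d+1) = cnt x d := hcd
    omega
end S16


namespace S16

variable {x : List Bool}

/-- suffix maximality : every window has at most as many 1s as the suffix window -/
lemma smax (hL : Lyndon x) (hB : Balanced01 x) :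
    ∀ l i, i + l ≤ x.length → cnt x (i + l) + cnt x (x.length - l) ≤ cnt x i + cnt x x.length := by
  intro l
  induction l using Nat.strong_induction_on with
  | _ l IH =>
  intro i hil
  by_contra hcon
  push_neg at hcon
  set m := x.length with hm
  rcases Nat.eq_zero_or_pos l with rfl | hl
  · simp at hcon
  rcases Nat.eq_or_lt_of_le hil with heq | hlt
  · -- i + l = m : window is the suffix window
    have h1 : m - l = i := by omega
    rw [heq, h1] at hcon
    omega
  -- now i + l < m, 1 ≤ l, so 1 ≤ m - l < m
  have hml1 : 1 ≤ m - l := by omega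
  have hmlm : m - l < m := by omega
  -- wmin at the suffix window
  have W1 : cnt x (m - l) + cnt x l ≤ cnt x m := by
    have := wmin hL hB (m - l) l (by omega)
    have he : m - l + l = m := by omega
    rwa [he] at this
  -- balanced cap against the prefix
  have C0 : cnt x (i + l) ≤ cnt x i + cnt x l + 1 := by
    have := cap hB (i := i) (i' := 0) (l := l) (by omega) (by omega)
    simpa using this
  -- Lyndon first-difference at position m - l
  obtain ⟨d, hd, hcd, hDt, hDd1⟩ := lyndon_struct hL hml1 hmlm
  have hdl : d < l := by omega
  obtain ⟨ls, hls⟩ : ∃ ls, l = d + 1 + ls := ⟨l - (d+1), by omega⟩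
  -- F1 : cnt x ((m-l) + (d+1)) = cnt x (m-l) + cnt x d + 1
  have F1 : cnt x ((m - l) + (d+1)) = cnt x (m - l) + cnt x d + 1 := by
    rw [cnt_add x (m - l) (d+1), hDd1]
    omega
  -- F3 : induction hypothesis at length ls at position i + (d+1)
  have F3 : cnt x (i + l) + cnt x ((m - l) + (d + 1)) ≤ cnt x (i + (d+1)) + cnt x m := by
    have := IH ls (by omega) (i + (d+1)) (by omega)
    have e1 : i + (d+1) + ls = i + l := by omega
    have e2 : m - ls = (m - l) + (d+1) := by omega
    rwa [e1, e2] at this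
  -- F4 : cap on the head of the window
  have F4 : cnt x (i + (d+1)) ≤ cnt x i + cnt x (d+1) + 1 := by
    have := cap hB (i := i) (i' := 0) (l := d+1) (by omega) (by omega)
    simpa using this
  omega

/-- strict upper density bound for proper prefixes of balanced Lyndon words -/
lemma ult (hL : Lyndon x) (hB : Balanced01 x) {j : ℕ} (hj1 : 1 ≤ j) (hj2 : j < x.length) :
    x.length * cnt x j + 1 ≤ j * cnt x x.length := by
  have hm0 : 0 < x.length := lyndon_pos hL
  set F : ℕ → ℤ := fun t =>
    ((t / x.length : ℕ) : ℤ) * (cnt x x.length : ℤ) + (cnt x (t % x.length) : ℤ) with hF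
  have hFle : ∀ s, s ≤ x.length → F s = (cnt x s : ℤ) := by
    intro s hs
    show ((s / x.length : ℕ) : ℤ) * (cnt x x.length : ℤ) + (cnt x (s % x.length) : ℤ)
      = (cnt x s : ℤ)
    rcases Nat.eq_or_lt_of_le hs with rfl | hlt
    · rw [Nat.div_self hm0, Nat.mod_self]
      simp
    · rw [Nat.div_eq_of_lt hlt, Nat.mod_eq_of_lt hlt]
      simp
  have hFadd : ∀ t, F (t + x.length) = F t + (cnt x x.length : ℤ) := by
    intro t
    show ((((t + x.length) / x.length : ℕ)) : ℤ) * _ + _ = _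
    rw [Nat.add_div_right _ hm0, Nat.add_mod_right]
    simp only [Nat.cast_add, Nat.cast_one]
    ring
  have hterm : ∀ t, t < x.length → (cnt x j : ℤ) ≤ F (j + t) - F t := by
    intro t ht
    rcases le_or_gt (t + j) x.length with hle | hgt
    · rw [show j + t = t + j by ring, hFle (t + j) hle, hFle t (le_of_lt ht)]
      have := wmin hL hB t j hle
      push_cast
      omega
    · obtain ⟨e, he⟩ : ∃ e, t + j = e + x.length := ⟨t + j - x.length, by omega⟩
      have he1 : 1 ≤ e := by omega
      have hej : e < j := by omega
      rw [show j + t = e + x.length by omega, hFadd e, hFle e (by omega),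
        hFle t (le_of_lt ht)]
      have hS := smax hL hB (x.length - j) e (by omega)
      rw [show e + (x.length - j) = t by omega, show x.length - (x.length - j) = j by omega]
        at hS
      push_cast
      omega
  have hsum : ∑ t ∈ Finset.range x.length, (F (j + t) - F t)
      = (j : ℤ) * (cnt x x.length : ℤ) := by
    have h1 : ∑ t ∈ Finset.range x.length, F (j + t) = ∑ t ∈ Finset.Ico j (j + x.length), F t := by
      rw [Finset.sum_Ico_eq_sum_range]
      simp
    have h2 : ∑ t ∈ Finset.range x.length, F t = ∑ t ∈ Finset.Ico 0 x.length, F t := by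
      rw [Finset.range_eq_Ico]
    have h3 : ∑ t ∈ Finset.Ico x.length (x.length + j), F t
        = ∑ t ∈ Finset.range j, F (x.length + t) := by
      rw [Finset.sum_Ico_eq_sum_range]
      simp
    have h4 : ∑ t ∈ Finset.range j, F (x.length + t)
        = (∑ t ∈ Finset.range j, F t) + (j : ℤ) * (cnt x x.length : ℤ) := by
      have hptw : ∀ t, F (x.length + t) = F t + (cnt x x.length : ℤ) := by
        intro t; rw [show x.length + t = t + x.length by ring]; exact hFadd t
      rw [Finset.sum_congr rfl (fun t _ => hptw t), Finset.sum_add_distrib]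
      simp [mul_comm]
    have h5 : ∑ t ∈ Finset.Ico 0 j, F t + ∑ t ∈ Finset.Ico j (j + x.length), F t
        = ∑ t ∈ Finset.Ico 0 (j + x.length), F t := Finset.sum_Ico_consecutive F (Nat.zero_le _) (Nat.le_add_right _ _)
    have h6 : ∑ t ∈ Finset.Ico 0 x.length, F t + ∑ t ∈ Finset.Ico x.length (x.length + j), F t
        = ∑ t ∈ Finset.Ico 0 (x.length + j), F t := Finset.sum_Ico_consecutive F (Nat.zero_le _) (Nat.le_add_right _ _)
    have h7 : ∑ t ∈ Finset.Ico 0 (j + x.length), F t = ∑ t ∈ Finset.Ico 0 (x.length + j), F t := by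
      rw [show j + x.length = x.length + j by ring]
    have h8 : ∑ t ∈ Finset.Ico 0 j, F t = ∑ t ∈ Finset.range j, F t := by
      rw [Finset.range_eq_Ico]
    rw [Finset.sum_sub_distrib, h1, h2]
    linarith [h3, h4, h5, h6, h7, h8]
  have hge : (x.length : ℤ) * (cnt x j : ℤ) ≤ (j : ℤ) * (cnt x x.length : ℤ) := by
    calc (x.length : ℤ) * (cnt x j : ℤ) = ∑ _t ∈ Finset.range x.length, (cnt x j : ℤ) := by
          rw [Finset.sum_const, Finset.card_range]; simp [mul_comm]
    _ ≤ ∑ t ∈ Finset.range x.length, (F (j + t) - F t) :=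
          Finset.sum_le_sum (fun t ht => hterm t (Finset.mem_range.mp ht))
    _ = (j : ℤ) * (cnt x x.length : ℤ) := hsum
  by_contra hcon
  push_neg at hcon
  have heq : (j : ℤ) * (cnt x x.length : ℤ) = (x.length : ℤ) * (cnt x j : ℤ) := by
    have h1 : j * cnt x x.length ≤ x.length * cnt x j := by omega
    have h2 : ((j * cnt x x.length : ℕ) : ℤ) ≤ ((x.length * cnt x j : ℕ) : ℤ) := by
      exact_mod_cast h1
    push_cast at h2
    linarith
  have hall : ∀ t ∈ Finset.range x.length, F (j + t) - F t = (cnt x j : ℤ) := by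
    intro t ht
    by_contra hne
    have hlt : (cnt x j : ℤ) < F (j + t) - F t :=
      lt_of_le_of_ne (hterm t (Finset.mem_range.mp ht)) (Ne.symm hne)
    have hsl := Finset.sum_lt_sum (f := fun _t => (cnt x j : ℤ))
      (fun i hi => hterm i (Finset.mem_range.mp hi)) ⟨t, ht, hlt⟩
    rw [hsum, Finset.sum_const, Finset.card_range, heq] at hsl
    simp [nsmul_eq_mul] at hsl
  have hdt : x.drop j = x.take (x.length - j) := by
    apply eq_of_cnt
    · rw [List.length_drop, List.length_take]
      omega
    · intro t ht
      rw [List.length_drop] at ht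
      have htm : t < x.length := by omega
      have e1 := hall t (Finset.mem_range.mpr htm)
      rw [hFle (j + t) (by omega), hFle t (by omega)] at e1
      have e2 : cnt x (j + t) = cnt x j + cnt (x.drop j) t := cnt_add x j t
      have e3 : cnt (x.take (x.length - j)) t = cnt x t := cnt_take x (x.length - j) t (by omega)
      omega
  have hpre : x.drop j <+: x := hdt ▸ List.take_prefix _ _
  have hlex : List.Lex (· < ·) x (x.drop j) :=
    hL.2 (x.take j) (x.drop j) (List.take_append_drop _ _).symm
      (List.ne_nil_of_length_pos (by rw [List.length_take]; omega))
      (List.ne_nil_of_length_pos (by rw [List.length_drop]; omega))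
  exact not_lex_of_prefix hpre hlex

/-- Christoffel bounds: upper -/
lemma cb_up (hL : Lyndon x) (hB : Balanced01 x) {j : ℕ} (hj : j ≤ x.length) :
    x.length * cnt x j ≤ j * cnt x x.length := by
  rcases Nat.eq_zero_or_pos j with rfl | hj1
  · simp
  rcases Nat.eq_or_lt_of_le hj with rfl | hjm
  · rw [Nat.mul_comm]
  · have := ult hL hB hj1 hjm
    omega

/-- Christoffel bounds: lower -/
lemma cb_lo (hL : Lyndon x) (hB : Balanced01 x) {j : ℕ} (hj : j ≤ x.length) :
    j * cnt x x.length + 1 ≤ x.length * cnt x j + x.length := by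
  have hm0 : 0 < x.length := lyndon_pos hL
  rcases Nat.eq_zero_or_pos j with rfl | hj1
  · simp; omega
  rcases Nat.eq_or_lt_of_le hj with rfl | hjm
  · omega
  set m := x.length with hm
  have f1 : m * cnt x (m - j) + 1 ≤ (m - j) * cnt x m := ult hL hB (by omega) (by omega)
  have f2 : cnt x m ≤ cnt x j + cnt x (m - j) + 1 := by
    have := cap hB (i := j) (i' := 0) (l := m - j) (by omega) (by omega)
    have he : j + (m - j) = m := by omega
    rw [he] at this
    simpa using this
  have f3 : m * cnt x m ≤ m * cnt x j + m * cnt x (m - j) + m := by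
    calc m * cnt x m ≤ m * (cnt x j + cnt x (m - j) + 1) := Nat.mul_le_mul_left m f2
    _ = m * cnt x j + m * cnt x (m - j) + m := by ring
  have f4 : j * cnt x m + (m - j) * cnt x m = m * cnt x m := by
    rw [← Nat.add_mul]
    congr 1
    omega
  linarith [f1, f3, f4]

end S16


namespace S16

lemma div_superadd (n p q : ℕ) : p / n + q / n ≤ (p + q) / n := by
  rcases Nat.eq_zero_or_pos n with rfl | hn
  · simp
  rw [Nat.le_div_iff_mul_le hn, Nat.add_mul]
  have h1 : p / n * n ≤ p := Nat.div_mul_le_self p n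
  have h2 : q / n * n ≤ q := Nat.div_mul_le_self q n
  omega

lemma div_subadd (n p q : ℕ) (hn : 0 < n) : (p + q) / n ≤ p / n + q / n + 1 := by
  have h : (p + q) / n < p / n + q / n + 2 := by
    rw [Nat.div_lt_iff_lt_mul hn]
    have e1 := Nat.div_add_mod p n
    have e2 := Nat.div_add_mod q n
    have m1 : p % n < n := Nat.mod_lt _ hn
    have m2 : q % n < n := Nat.mod_lt _ hn
    have expand : (p / n + q / n + 2) * n = n * (p / n) + n * (q / n) + 2 * n := by ring
    linarith
  omega

lemma chr_length (a b : ℕ) : (chr a b).length = a + b := by simp [chr]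

lemma cnt_chr (a b : ℕ) : ∀ j, j ≤ a + b → cnt (chr a b) j = j * b / (a + b) := by
  intro j
  induction j with
  | zero => intro _; simp
  | succ j ih =>
    intro hj
    have hjl : j < (chr a b).length := by rw [chr_length]; omega
    rw [cnt_succ _ hjl, ih (by omega)]
    have hval : (chr a b)[j] = decide (j * b / (a + b) < (j + 1) * b / (a + b)) := by
      simp [chr]
    rw [hval]
    have hmono : j * b / (a + b) ≤ (j + 1) * b / (a + b) :=
      Nat.div_le_div_right (by nlinarith)
    have hstep : (j + 1) * b / (a + b) ≤ j * b / (a + b) + 1 := by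
      have h1 : (j + 1) * b ≤ j * b + (a + b) := by nlinarith [Nat.le_add_left b a]
      calc (j + 1) * b / (a + b) ≤ (j * b + (a + b)) / (a + b) := Nat.div_le_div_right h1
      _ = j * b / (a + b) + 1 := by
          rcases Nat.eq_zero_or_pos (a + b) with h0 | hpos
          · omega
          · rw [Nat.add_div_right _ hpos]
    rcases lt_or_ge (j * b / (a + b)) ((j + 1) * b / (a + b)) with hlt | hge
    · simp only [decide_eq_true hlt]
      simp
      omega
    · have : ¬ (j * b / (a + b) < (j + 1) * b / (a + b)) := by omega
      simp only [decide_eq_false this]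
      simp
      omega

lemma count_chr (a b : ℕ) (hn : 0 < a + b) : (chr a b).count true = b := by
  have h := cnt_chr a b (a + b) le_rfl
  have h2 : cnt (chr a b) (a + b) = (chr a b).count true := by
    conv_lhs => rw [← chr_length a b]
    exact cnt_len _
  rw [h2] at h
  rw [h, Nat.mul_comm, Nat.mul_div_cancel _ hn]

/-- infix counts as differences of prefix counts -/
lemma infix_count {w u : List Bool} (h : u <:+: w) :
    ∃ i, i + u.length ≤ w.length ∧ cnt w i + u.count true = cnt w (i + u.length) := by
  obtain ⟨s, t, hst⟩ := h
  refine ⟨s.length, ?_, ?_⟩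
  · have := congrArg List.length hst
    simp at this
    omega
  · have e1 : cnt w s.length = s.count true := by
      rw [← hst]
      simp only [cnt_append]
      simp [cnt_len]
    have e2 : cnt w (s.length + u.length) = s.count true + u.count true := by
      rw [← hst]
      simp only [cnt_append, List.length_append]
      have h1 : s.length + u.length - s.length = u.length := by omega
      have h2 : s.length + u.length - (s.length + u.length) = 0 := by omega
      rw [h1, h2]
      simp [cnt_len, cnt_of_le]
    omega

lemma balanced_chr (a b : ℕ) : Balanced01 (chr a b) := by
  intro u v hu hv hlen
  rcases Nat.eq_zero_or_pos (a + b) with h0 | hn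
  · have : (chr a b) = [] := by
      have := chr_length a b
      rw [h0] at this
      exact List.length_eq_zero_iff.mp this
    rw [this] at hu hv
    rw [List.infix_nil.mp hu, List.infix_nil.mp hv]
    simp
  obtain ⟨i, hi, hiC⟩ := infix_count hu
  obtain ⟨i', hi', hiC'⟩ := infix_count hv
  rw [chr_length] at hi hi'
  rw [cnt_chr _ _ i (by omega), cnt_chr _ _ (i + u.length) (by omega)] at hiC
  rw [cnt_chr _ _ i' (by omega), ← hlen, cnt_chr _ _ (i' + u.length) (by omega)] at hiC'
  have key : (i + u.length) * b / (a + b) + i' * b / (a + b)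
      ≤ i * b / (a + b) + (i' + u.length) * b / (a + b) + 1 := by
    have e1 : (i + u.length) * b = i * b + u.length * b := by ring
    have e2 : (i' + u.length) * b = i' * b + u.length * b := by ring
    rw [e1, e2]
    have f1 : (i * b + u.length * b) / (a + b) ≤ i * b / (a + b) + u.length * b / (a + b) + 1 :=
      div_subadd (a + b) _ _ hn
    have f2 : i' * b / (a + b) + u.length * b / (a + b) ≤ (i' * b + u.length * b) / (a + b) :=
      div_superadd (a + b) _ _
    omega
  omega

lemma lyndon_chr {a b : ℕ} (hco : Nat.Coprime b (a + b)) (hn : 0 < a + b) :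
    Lyndon (chr a b) := by
  constructor
  · exact List.ne_nil_of_length_pos (by rw [chr_length]; omega)
  intro u v huv hu hv
  have hvd : v = (chr a b).drop u.length := by
    rw [huv, List.drop_left]
  have hlen : (chr a b).length = a + b := chr_length a b
  have ht1 : 1 ≤ u.length := List.length_pos_iff.mpr hu
  have ht2 : u.length < a + b := by
    have h1 := congrArg List.length huv
    simp [hlen] at h1
    have h2 := List.length_pos_iff.mpr hv
    omega
  rw [hvd]
  have hb : 0 < b := by
    rcases Nat.eq_zero_or_pos b with rfl | h
    · have : a + 0 = 1 := by simpa [Nat.coprime_zero_left] using hco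
      omega
    · exact h
  have hq : u.length * b / (a + b) < b := by
    rw [Nat.div_lt_iff_lt_mul (by omega)]
    nlinarith
  have hr : 0 < u.length * b % (a + b) := by
    rcases Nat.eq_zero_or_pos (u.length * b % (a + b)) with h0 | h
    · exfalso
      have hdvd : (a + b) ∣ u.length * b := Nat.dvd_of_mod_eq_zero h0
      have h3 : (a + b) ∣ u.length := (Nat.Coprime.symm hco).dvd_of_dvd_mul_right hdvd
      have := Nat.le_of_dvd (by omega) h3
      omega
    · exact h
  apply lexA
  · intro p hp hp2
    rw [hlen] at hp
    rw [List.length_drop, hlen] at hp2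
    rw [cnt_chr a b p (by omega)]
    have hadd : cnt (chr a b) (u.length + p)
        = cnt (chr a b) u.length + cnt ((chr a b).drop u.length) p := cnt_add _ u.length p
    rw [cnt_chr a b (u.length + p) (by omega), cnt_chr a b u.length (by omega)] at hadd
    have hsup : u.length * b / (a + b) + p * b / (a + b) ≤ (u.length + p) * b / (a + b) := by
      have e : (u.length + p) * b = u.length * b + p * b := by ring
      rw [e]
      exact div_superadd (a + b) _ _
    omega
  · right
    refine ⟨a + b - u.length, by rw [hlen]; omega, by rw [List.length_drop, hlen], ?_⟩
    have hadd : cnt (chr a b) (u.length + (a + b - u.length))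
        = cnt (chr a b) u.length + cnt ((chr a b).drop u.length) (a + b - u.length) :=
      cnt_add _ u.length _
    rw [show u.length + (a + b - u.length) = a + b by omega] at hadd
    have hcn : cnt (chr a b) (a + b) = b := by
      have h2 : cnt (chr a b) (a + b) = (chr a b).count true := by
        conv_lhs => rw [← chr_length a b]
        exact cnt_len _
      rw [h2]
      exact count_chr a b hn
    rw [cnt_chr a b u.length (by omega)] at hadd
    rw [cnt_chr a b (a + b - u.length) (by omega)]
    obtain ⟨c, hc⟩ : ∃ c, b = u.length * b / (a + b) + 1 + c :=
      ⟨b - (u.length * b / (a + b) + 1), by omega⟩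
    obtain ⟨s, hs⟩ : ∃ s, a + b = u.length * b % (a + b) + s :=
      ⟨a + b - u.length * b % (a + b),
        by have := Nat.mod_lt (u.length * b) (show 0 < a + b by omega); omega⟩
    obtain ⟨tt, htt⟩ : ∃ tt, a + b = u.length + tt := ⟨a + b - u.length, by omega⟩
    have e0 : u.length * b = (a + b) * (u.length * b / (a + b)) + u.length * b % (a + b) :=
      (Nat.div_add_mod _ _).symm
    have E1 : (a + b) * b = u.length * b + tt * b := by
      conv_lhs => rw [htt]
      ring
    have E2 : (a + b) * b = (a + b) * (u.length * b / (a + b)) + (a + b) + (a + b) * c := by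
      have := congrArg (fun z => (a + b) * z) hc
      simp only [Nat.mul_add, Nat.mul_one] at this
      omega
    have egoal : tt * b = (a + b) * c + s := by linarith [E1, E2, e0, hs]
    have e2 : (a + b - u.length) * b / (a + b) = c := by
      rw [show a + b - u.length = tt by omega, egoal, Nat.mul_add_div (by omega)]
      rw [Nat.div_eq_of_lt (by omega)]
      omega
    rw [e2]
    omega

lemma notlex_chr {a₁ b₁ a₂ b₂ : ℕ} (h1 : Nat.Coprime b₁ (a₁ + b₁))
    (h2 : Nat.Coprime b₂ (a₂ + b₂)) (hn1 : 0 < a₁ + b₁) (hn2 : 0 < a₂ + b₂)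
    (hs : b₂ * (a₁ + b₁) ≤ b₁ * (a₂ + b₂)) :
    ¬ List.Lex (· < ·) (chr a₁ b₁) (chr a₂ b₂) := by
  rcases Nat.eq_or_lt_of_le hs with heq | hlt
  · -- equal slopes: equal words
    have hb : b₁ = b₂ := by
      have d1 : b₁ ∣ b₂ * (a₁ + b₁) := heq ▸ Dvd.intro _ rfl
      have d2 : b₂ ∣ b₁ * (a₂ + b₂) := heq.symm ▸ Dvd.intro _ rfl
      exact Nat.dvd_antisymm (h1.dvd_of_dvd_mul_right d1) (h2.dvd_of_dvd_mul_right d2)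
    have hn : a₁ + b₁ = a₂ + b₂ := by
      rcases Nat.eq_zero_or_pos b₁ with rfl | hbpos
    
      · have e1 : a₁ + 0 = 1 := by simpa [Nat.coprime_zero_left] using h1
        have e2 : a₂ + b₂ = 1 := by
          subst hb
          simpa [Nat.coprime_zero_left] using h2
        omega
      · apply Nat.eq_of_mul_eq_mul_left hbpos
        calc b₁ * (a₁ + b₁) = b₂ * (a₁ + b₁) := by rw [hb]
        _ = b₁ * (a₂ + b₂) := heq
    have ha : a₁ = a₂ := by omega
    rw [hb, ha]
    exact not_lex_of_prefix (List.prefix_refl _)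
  · apply lexB
    · intro j hj hj2
      rw [chr_length] at hj hj2
      rw [cnt_chr a₁ b₁ j hj, cnt_chr a₂ b₂ j hj2]
      have e1 : j * b₂ / (a₂ + b₂) = j * b₂ * (a₁ + b₁) / ((a₂ + b₂) * (a₁ + b₁)) :=
        (Nat.mul_div_mul_right _ _ hn1).symm
      have e2 : j * b₁ / (a₁ + b₁) = j * b₁ * (a₂ + b₂) / ((a₁ + b₁) * (a₂ + b₂)) :=
        (Nat.mul_div_mul_right _ _ hn2).symm
      rw [e1, e2, Nat.mul_comm (a₂ + b₂) (a₁ + b₁)]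
      apply Nat.div_le_div_right
      calc j * b₂ * (a₁ + b₁) = j * (b₂ * (a₁ + b₁)) := by ring
      _ ≤ j * (b₁ * (a₂ + b₂)) := Nat.mul_le_mul_left _ (le_of_lt hlt)
      _ = j * b₁ * (a₂ + b₂) := by ring
    · intro hle
      rw [chr_length, chr_length] at hle
      rw [chr_length a₁ b₁]
      rw [cnt_chr a₂ b₂ _ hle, cnt_chr a₁ b₁ _ le_rfl]
      have e1 : (a₁ + b₁) * b₁ / (a₁ + b₁) = b₁ := by
        rw [Nat.mul_comm, Nat.mul_div_cancel _ hn1]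
      rw [e1, Nat.div_lt_iff_lt_mul hn2]
      calc (a₁ + b₁) * b₂ = b₂ * (a₁ + b₁) := by ring
      _ < b₁ * (a₂ + b₂) := hlt

end S16


namespace S16

/-- the chord property (subtraction-free form) -/
def Qp (w : List Bool) : Prop :=
  ∀ i a b, 0 < a → 0 < b → i + a + b ≤ w.length →
    b * cnt w i + a * cnt w (i + a + b) + 1 ≤ (a + b) * cnt w (i + a) + (a + b)

/-- Christoffel bounds package -/
def CBp (x : List Bool) : Prop :=
  0 < x.length ∧ ∀ j, j ≤ x.length →
    x.length * cnt x j ≤ j * cnt x x.length ∧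
    j * cnt x x.length + 1 ≤ x.length * cnt x j + x.length

lemma cbp_of {x : List Bool} (hL : Lyndon x) (hB : Balanced01 x) : CBp x :=
  ⟨lyndon_pos hL, fun _ hj => ⟨cb_up hL hB hj, cb_lo hL hB hj⟩⟩

/-- slope comparison: slope of y at most slope of x -/
def Rsl (x y : List Bool) : Prop :=
  cnt y y.length * x.length ≤ cnt x x.length * y.length

lemma slope_of_notlex {x y : List Bool} (hx : CBp x) (hy : CBp y)
    (h : ¬ List.Lex (· < ·) x y) : Rsl x y := by
  by_contra hc
  unfold Rsl at hc
  push_neg at hc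
  apply h
  apply lexA
  · intro p hp hp2
    rcases Nat.eq_zero_or_pos p with rfl | hppos
    · simp
    have f1 : x.length * cnt x p ≤ p * cnt x x.length := ((hx.2 p hp).1)
    have f2 : p * cnt y y.length + 1 ≤ y.length * cnt y p + y.length := ((hy.2 p hp2).2)
    have key : (x.length * y.length) * cnt x p < (x.length * y.length) * (cnt y p + 1) := by
      calc (x.length * y.length) * cnt x p = y.length * (x.length * cnt x p) := by ring
      _ ≤ y.length * (p * cnt x x.length) := Nat.mul_le_mul_left _ f1
      _ = p * (cnt x x.length * y.length) := by ring
      _ < p * (cnt y y.length * x.length) := mul_lt_mul_of_pos_left hc hppos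
      _ = x.length * (p * cnt y y.length) := by ring
      _ < x.length * (y.length * (cnt y p + 1)) := by
          apply mul_lt_mul_of_pos_left _ hx.1
          calc p * cnt y y.length < p * cnt y y.length + 1 := by omega
          _ ≤ y.length * cnt y p + y.length := f2
          _ = y.length * (cnt y p + 1) := by ring
      _ = (x.length * y.length) * (cnt y p + 1) := by ring
    have := Nat.lt_of_mul_lt_mul_left key
    omega
  · rcases lt_or_ge x.length y.length with hl | hl
    · exact Or.inl hl
    · right
      refine ⟨y.length, hl, le_rfl, ?_⟩
      have f1 : x.length * cnt x y.length ≤ y.length * cnt x x.length := ((hx.2 y.length hl).1)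
      have key : x.length * cnt x y.length < x.length * cnt y y.length := by
        calc x.length * cnt x y.length ≤ y.length * cnt x x.length := f1
        _ = cnt x x.length * y.length := by ring
        _ < cnt y y.length * x.length := hc
        _ = x.length * cnt y y.length := by ring
      exact Nat.lt_of_mul_lt_mul_left key

/-- packaged slope relation -/
def Rsl' (x y : List Bool) : Prop := CBp x ∧ CBp y ∧ Rsl x y

lemma rsl'_trans : Transitive Rsl' := by
  intro a b c h1 h2
  refine ⟨h1.1, h2.2.1, ?_⟩
  have r1 := h1.2.2
  have r2 := h2.2.2
  have hb : 0 < b.length := h1.2.1.1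
  have key : b.length * (cnt c c.length * a.length) ≤ b.length * (cnt a a.length * c.length) := by
    calc b.length * (cnt c c.length * a.length)
        = (cnt c c.length * b.length) * a.length := by ring
    _ ≤ (cnt b b.length * c.length) * a.length := Nat.mul_le_mul_right _ r2
    _ = (cnt b b.length * a.length) * c.length := by ring
    _ ≤ (cnt a a.length * b.length) * c.length := Nat.mul_le_mul_right _ r1
    _ = b.length * (cnt a a.length * c.length) := by ring
  exact Nat.le_of_mul_le_mul_left key hb

lemma chain_up : ∀ {L : List (List Bool)}, (∀ x ∈ L, CBp x) →
    List.Chain' (fun a b => ¬ List.Lex (· < ·) a b) L → List.Chain' Rsl' L := by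
  intro L
  induction L with
  | nil => intro _ _; exact List.isChain_nil
  | cons x L ih =>
    intro hall hch
    rcases List.isChain_cons.mp hch with ⟨hhd, htl⟩
    refine List.isChain_cons.mpr ⟨?_, ih (fun y hy => hall y (List.mem_cons_of_mem _ hy)) htl⟩
    intro y hy
    exact ⟨hall x (by simp), hall y (List.mem_cons_of_mem _ (List.mem_of_mem_head? hy)),
      slope_of_notlex (hall x (by simp))
        (hall y (List.mem_cons_of_mem _ (List.mem_of_mem_head? hy))) (hhd y hy)⟩

/-- chain of non-lex implies pairwise slope domination -/
lemma chain_pairwise {L : List (List Bool)} (hall : ∀ x ∈ L, CBp x)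
    (hch : List.Chain' (fun a b => ¬ List.Lex (· < ·) a b) L) : List.Pairwise Rsl L := by
  haveI : IsTrans (List Bool) Rsl' := ⟨fun a b c h1 h2 => rsl'_trans h1 h2⟩
  have h1 : List.Chain' Rsl' L := chain_up hall hch
  have h2 : List.Pairwise Rsl' L := List.isChain_iff_pairwise.mp h1
  exact h2.imp (fun h => h.2.2)

end S16


namespace S16

lemma cnt_shift (x G : List Bool) (t : ℕ) :
    cnt (x ++ G) (x.length + t) = cnt x x.length + cnt G t := by
  rw [cnt_append, cnt_of_le x (by omega)]
  congr 2
  omega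

lemma cnt_pre (x G : List Bool) {t : ℕ} (ht : t ≤ x.length) :
    cnt (x ++ G) t = cnt x t := by
  rw [cnt_append]
  have : t - x.length = 0 := by omega
  rw [this]
  simp

/-- C1 : paths of slope-dominated factor lists stay below the line (exactly) -/
lemma c1 : ∀ (L : List (List Bool)) (h0 m0 : ℕ), (∀ x ∈ L, CBp x) →
    (∀ x ∈ L, cnt x x.length * m0 ≤ h0 * x.length) →
    ∀ k, k ≤ L.flatten.length → m0 * cnt L.flatten k ≤ k * h0 := by
  intro L
  induction L with
  | nil => intro h0 m0 _ _ k hk; simp at hk; simp [hk]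
  | cons x L ih =>
    intro h0 m0 hcb hsl k hk
    have hx := hcb x (by simp)
    have hsx := hsl x (by simp)
    rw [List.flatten_cons]
    rw [List.flatten_cons, List.length_append] at hk
    rcases le_or_gt k x.length with hkx | hkx
    · rw [cnt_pre x L.flatten hkx]
      have f1 : x.length * cnt x k ≤ k * cnt x x.length := (hx.2 k hkx).1
      have key : x.length * (m0 * cnt x k) ≤ x.length * (k * h0) := by
        calc x.length * (m0 * cnt x k) = m0 * (x.length * cnt x k) := by ring
        _ ≤ m0 * (k * cnt x x.length) := Nat.mul_le_mul_left _ f1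
        _ = k * (cnt x x.length * m0) := by ring
        _ ≤ k * (h0 * x.length) := Nat.mul_le_mul_left _ hsx
        _ = x.length * (k * h0) := by ring
      exact Nat.le_of_mul_le_mul_left key hx.1
    · obtain ⟨k', rfl⟩ : ∃ k', k = x.length + k' := ⟨k - x.length, by omega⟩
      rw [cnt_shift]
      have hk' : k' ≤ L.flatten.length := by omega
      have f2 := ih h0 m0 (fun y hy => hcb y (by simp [hy])) (fun y hy => hsl y (by simp [hy]))
        k' hk'
      have f3 : m0 * cnt x x.length ≤ x.length * h0 := by
        calc m0 * cnt x x.length = cnt x x.length * m0 := by ring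
        _ ≤ h0 * x.length := hsx
        _ = x.length * h0 := by ring
      calc m0 * (cnt x x.length + cnt L.flatten k')
          = m0 * cnt x x.length + m0 * cnt L.flatten k' := by ring
      _ ≤ x.length * h0 + k' * h0 := by omega
      _ = (x.length + k') * h0 := by ring

/-- within-factor version of C2 -/
lemma inx2 {x : List Bool} (hx : CBp x) {j g : ℕ} (hjg : j + g ≤ x.length)
    {h0 m0 : ℕ} (hm0 : 0 < m0) (hsx : cnt x x.length * m0 ≤ h0 * x.length) :
    m0 * cnt x (j + g) + 1 ≤ m0 * cnt x j + g * h0 + m0 := by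
  obtain ⟨D, hD⟩ : ∃ D, cnt x (j + g) = cnt x j + D :=
    ⟨cnt x (j+g) - cnt x j, by have := cnt_mono x (show j ≤ j + g by omega); omega⟩
  have f1 : x.length * cnt x (j + g) ≤ (j + g) * cnt x x.length := (hx.2 _ hjg).1
  have f2 : j * cnt x x.length + 1 ≤ x.length * cnt x j + x.length := (hx.2 j (by omega)).2
  -- x.length * D + 1 ≤ g * cnt x x.length + x.length
  have f3 : x.length * D + 1 ≤ g * cnt x x.length + x.length := by
    have e1 : x.length * cnt x (j + g) = x.length * cnt x j + x.length * D := by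
      rw [hD]; ring
    have e2 : (j + g) * cnt x x.length = j * cnt x x.length + g * cnt x x.length := by ring
    linarith
  -- multiply by m0 and convert slope
  have key : x.length * (m0 * D) < x.length * (g * h0 + m0) := by
    have g1 : m0 * (x.length * D + 1) ≤ m0 * (g * cnt x x.length + x.length) :=
      Nat.mul_le_mul_left _ f3
    have g2 : g * (cnt x x.length * m0) ≤ g * (h0 * x.length) := Nat.mul_le_mul_left _ hsx
    have e3 : m0 * (x.length * D + 1) = x.length * (m0 * D) + m0 := by ring
    have e4 : m0 * (g * cnt x x.length + x.length) = g * (cnt x x.length * m0) + m0 * x.length := by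
      ring
    have e5 : g * (h0 * x.length) = x.length * (g * h0) := by ring
    have e7 : x.length * (g * h0 + m0) = x.length * (g * h0) + m0 * x.length := by ring
    linarith
  have hD2 : m0 * D < g * h0 + m0 := Nat.lt_of_mul_lt_mul_left key
  have e8 : m0 * cnt x (j + g) = m0 * cnt x j + m0 * D := by rw [hD]; ring
  linarith

/-- C2 : slope-dominated factor lists: rises are bounded with slack < 1 -/
lemma c2 : ∀ (L : List (List Bool)) (h0 m0 : ℕ), 0 < m0 → (∀ x ∈ L, CBp x) →
    (∀ x ∈ L, cnt x x.length * m0 ≤ h0 * x.length) →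
    ∀ j g, j + g ≤ L.flatten.length →
      m0 * cnt L.flatten (j + g) + 1 ≤ m0 * cnt L.flatten j + g * h0 + m0 := by
  intro L
  induction L with
  | nil => intro h0 m0 hm0 _ _ j g hk; simp at hk; simp [hk.1, hk.2]; omega
  | cons x L ih =>
    intro h0 m0 hm0 hcb hsl j g hjg
    have hx := hcb x (by simp)
    have hsx := hsl x (by simp)
    rw [List.flatten_cons] at hjg ⊢
    rw [List.length_append] at hjg
    rcases le_or_gt (j + g) x.length with hc1 | hc1
    · rw [cnt_pre x L.flatten hc1, cnt_pre x L.flatten (by omega)]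
      exact inx2 hx hc1 hm0 hsx
    rcases le_or_gt x.length j with hc2 | hc2
    · -- both beyond x
      obtain ⟨j', rfl⟩ : ∃ j', j = x.length + j' := ⟨j - x.length, by omega⟩
      rw [show x.length + j' + g = x.length + (j' + g) by ring, cnt_shift, cnt_shift]
      have := ih h0 m0 hm0 (fun y hy => hcb y (by simp [hy])) (fun y hy => hsl y (by simp [hy]))
        j' g (by omega)
      have e1 : m0 * (cnt x x.length + cnt L.flatten (j' + g))
          = m0 * cnt x x.length + m0 * cnt L.flatten (j' + g) := by ring
      have e2 : m0 * (cnt x x.length + cnt L.flatten j')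
          = m0 * cnt x x.length + m0 * cnt L.flatten j' := by ring
      linarith
    · -- j < x.length < j + g : split
      obtain ⟨g1, hg1⟩ : ∃ g1, x.length = j + g1 := ⟨x.length - j, by omega⟩
      obtain ⟨g2, hg2⟩ : ∃ g2, g = g1 + g2 := ⟨g - g1, by omega⟩
      have p1 : m0 * cnt x x.length + 1 ≤ m0 * cnt x j + g1 * h0 + m0 := by
        have := inx2 hx (show j + g1 ≤ x.length by omega) hm0 hsx
        rw [← hg1] at this
        exact this
      have p2 : m0 * cnt L.flatten g2 ≤ g2 * h0 :=
        c1 L h0 m0 (fun y hy => hcb y (by simp [hy])) (fun y hy => hsl y (by simp [hy]))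
          g2 (by omega)
      have e0 : j + g = x.length + g2 := by omega
      rw [e0, cnt_shift, cnt_pre x L.flatten (by omega)]
      have e1 : m0 * (cnt x x.length + cnt L.flatten g2)
          = m0 * cnt x x.length + m0 * cnt L.flatten g2 := by ring
      have e2 : g * h0 = g1 * h0 + g2 * h0 := by rw [hg2]; ring
      linarith

/-- within-factor chord property -/
lemma inx {x : List Bool} (hx : CBp x) : ∀ i a b, 0 < a → 0 < b → i + a + b ≤ x.length →
    b * cnt x i + a * cnt x (i + a + b) + 1 ≤ (a + b) * cnt x (i + a) + (a + b) := by
  intro i a b ha hb htot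
  have up_i : x.length * cnt x i ≤ i * cnt x x.length := (hx.2 i (by omega)).1
  have up_k : x.length * cnt x (i + a + b) ≤ (i + a + b) * cnt x x.length :=
    (hx.2 _ htot).1
  have lo_j : (i + a) * cnt x x.length + 1 ≤ x.length * cnt x (i + a) + x.length :=
    (hx.2 (i + a) (by omega)).2
  have key : x.length * (b * cnt x i + a * cnt x (i + a + b))
      < x.length * ((a + b) * cnt x (i + a) + (a + b)) := by
    have g1 : b * (x.length * cnt x i) ≤ b * (i * cnt x x.length) := Nat.mul_le_mul_left _ up_i
    have g2 : a * (x.length * cnt x (i + a + b)) ≤ a * ((i + a + b) * cnt x x.length) :=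
      Nat.mul_le_mul_left _ up_k
    have g3 : (a + b) * ((i + a) * cnt x x.length + 1)
        ≤ (a + b) * (x.length * cnt x (i + a) + x.length) := Nat.mul_le_mul_left _ lo_j
    have idt : b * (i * cnt x x.length) + a * ((i + a + b) * cnt x x.length)
        = (a + b) * ((i + a) * cnt x x.length) := by ring
    have e1 : x.length * (b * cnt x i + a * cnt x (i + a + b))
        = b * (x.length * cnt x i) + a * (x.length * cnt x (i + a + b)) := by ring
    have e2 : x.length * ((a + b) * cnt x (i + a) + (a + b))
        = (a + b) * (x.length * cnt x (i + a) + x.length) := by ring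
    have e3 : (a + b) * ((i + a) * cnt x x.length + 1)
        = (a + b) * ((i + a) * cnt x x.length) + (a + b) := by ring
    have hab : 0 < a + b := by omega
    linarith
  exact Nat.lt_of_mul_lt_mul_left key

end S16


namespace S16

/-- main lemma: slope-sorted Christoffel-bounded factor lists give the chord property -/
lemma ql : ∀ (L : List (List Bool)), (∀ x ∈ L, CBp x) → List.Pairwise Rsl L →
    Qp L.flatten := by
  intro L
  induction L with
  | nil => intro _ _ i a b ha hb htot; simp at htot; omega
  | cons x L ih =>
    intro hcb hpw i a b ha hb htot
    have hx := hcb x (by simp)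
    have hhd : ∀ y ∈ L, Rsl x y := fun y hy => (List.pairwise_cons.mp hpw).1 y hy
    have hpw' := (List.pairwise_cons.mp hpw).2
    have hcb' : ∀ y ∈ L, CBp y := fun y hy => hcb y (by simp [hy])
    have hself : cnt x x.length * x.length ≤ cnt x x.length * x.length := le_rfl
    have hsl : ∀ y ∈ (x :: L), cnt y y.length * x.length ≤ cnt x x.length * y.length := by
      intro y hy
      rcases List.mem_cons.mp hy with rfl | hy'
      · rw [Nat.mul_comm]
      · exact hhd y hy'
    have hsl' : ∀ y ∈ L, cnt y y.length * x.length ≤ cnt x x.length * y.length := hhd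
    rw [List.flatten_cons] at htot ⊢
    rw [List.length_append] at htot
    rcases le_or_gt (i + a + b) x.length with hcase1 | hcase1
    · -- entirely within x
      rw [cnt_pre x L.flatten (t := i) (by omega), cnt_pre x L.flatten (t := i + a) (by omega),
        cnt_pre x L.flatten (t := i + a + b) hcase1]
      exact inx hx i a b ha hb hcase1
    rcases le_or_gt x.length i with hcase2 | hcase2
    · -- entirely within L
      obtain ⟨i', rfl⟩ : ∃ i', i = x.length + i' := ⟨i - x.length, by omega⟩
      rw [show x.length + i' + a = x.length + (i' + a) by ring,
        show x.length + (i' + a) + b = x.length + (i' + a + b) by ring,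
        cnt_shift, cnt_shift, cnt_shift]
      have := ih hcb' hpw' i' a b ha hb (by omega)
      have e1 : b * (cnt x x.length + cnt L.flatten i')
          = b * cnt x x.length + b * cnt L.flatten i' := by ring
      have e2 : a * (cnt x x.length + cnt L.flatten (i' + a + b))
          = a * cnt x x.length + a * cnt L.flatten (i' + a + b) := by ring
      have e3 : (a + b) * (cnt x x.length + cnt L.flatten (i' + a))
          = b * cnt x x.length + a * cnt x x.length + (a + b) * cnt L.flatten (i' + a) := by ring
      linarith
    rcases le_or_gt (i + a) x.length with hcase3 | hcase3
    · -- i < j ≤ x.length < k : j in x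
      have hsi : cnt ((x :: L).flatten) i = cnt x i := by
        rw [List.flatten_cons]; exact cnt_pre x L.flatten (by omega)
      have hsj : cnt ((x :: L).flatten) (i + a) = cnt x (i + a) := by
        rw [List.flatten_cons]; exact cnt_pre x L.flatten hcase3
      rw [List.flatten_cons] at hsi hsj
      rw [hsi, hsj]
      -- B-side from c2 on the whole list
      have hc2 := c2 (x :: L) (cnt x x.length) x.length hx.1 hcb hsl (i + a) b
        (by rw [List.flatten_cons, List.length_append]; omega)
      rw [List.flatten_cons] at hc2
      rw [show i + a + b = (i + a) + b from rfl] at htot ⊢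
      rw [cnt_pre x L.flatten hcase3] at hc2
      -- A-side bounds within x
      have up_i : x.length * cnt x i ≤ i * cnt x x.length := (hx.2 i (by omega)).1
      have lo_j : (i + a) * cnt x x.length + 1 ≤ x.length * cnt x (i + a) + x.length :=
        (hx.2 (i + a) hcase3).2
      -- combine: multiply target by x.length
      have key : x.length * (b * cnt x i + a * cnt (x ++ L.flatten) (i + a + b))
          < x.length * ((a + b) * cnt x (i + a) + (a + b)) := by
        have I1 : b * (x.length * cnt x i) ≤ b * (i * cnt x x.length) :=
          Nat.mul_le_mul_left _ up_i
        have I2 : a * (x.length * cnt (x ++ L.flatten) ((i + a) + b)) + a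
            ≤ a * (x.length * cnt x (i + a)) + a * (b * cnt x x.length) + a * x.length := by
          have h' := Nat.mul_le_mul_left a hc2
          have e1 : a * (x.length * cnt (x ++ L.flatten) (i + a + b) + 1)
              = a * (x.length * cnt (x ++ L.flatten) ((i + a) + b)) + a := by ring
          have e2 : a * (x.length * cnt x (i + a) + b * cnt x x.length + x.length)
              = a * (x.length * cnt x (i + a)) + a * (b * cnt x x.length)
                + a * x.length := by ring
          omega
        have I3 : b * ((i + a) * cnt x x.length) + b
            ≤ b * (x.length * cnt x (i + a)) + b * x.length := by
          have h' := Nat.mul_le_mul_left b lo_j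
          have e1 : b * ((i + a) * cnt x x.length + 1)
              = b * ((i + a) * cnt x x.length) + b := by ring
          have e2 : b * (x.length * cnt x (i + a) + x.length)
              = b * (x.length * cnt x (i + a)) + b * x.length := by ring
          omega
        have idt : b * (i * cnt x x.length) + a * (b * cnt x x.length)
            = b * ((i + a) * cnt x x.length) := by ring
        have e1 : x.length * (b * cnt x i + a * cnt (x ++ L.flatten) (i + a + b))
            = b * (x.length * cnt x i)
              + a * (x.length * cnt (x ++ L.flatten) ((i + a) + b)) := by ring
        have e2 : x.length * ((a + b) * cnt x (i + a) + (a + b))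
            = a * (x.length * cnt x (i + a)) + b * (x.length * cnt x (i + a))
              + a * x.length + b * x.length := by ring
        linarith
      exact Nat.lt_of_mul_lt_mul_left key
    · -- i < x.length < i + a : j, k in L
      obtain ⟨a1, ha1⟩ : ∃ a1, x.length = i + a1 := ⟨x.length - i, by omega⟩
      obtain ⟨a2, ha2⟩ : ∃ a2, a = a1 + a2 := ⟨a - a1, by omega⟩
      have ha2pos : 0 < a2 := by omega
      have ha1pos : 0 < a1 := by omega
      -- counts
      have hsi : cnt (x ++ L.flatten) i = cnt x i := cnt_pre x L.flatten (by omega)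
      have hsj : cnt (x ++ L.flatten) (i + a) = cnt x x.length + cnt L.flatten a2 := by
        rw [show i + a = x.length + a2 by omega]
        exact cnt_shift x L.flatten a2
      have hsk : cnt (x ++ L.flatten) (i + a + b)
          = cnt x x.length + cnt L.flatten (a2 + b) := by
        rw [show i + a + b = x.length + (a2 + b) by omega]
        exact cnt_shift x L.flatten (a2 + b)
      rw [hsi, hsj, hsk]
      -- IH triple (0, a2, b) in L.flatten
      have hih := ih hcb' hpw' 0 a2 b ha2pos hb (by omega)
      simp only [Nat.zero_add, cnt_zero, Nat.mul_zero] at hih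
      -- monotone R
      obtain ⟨R, hR⟩ : ∃ R, cnt L.flatten (a2 + b) = cnt L.flatten a2 + R :=
        ⟨cnt L.flatten (a2 + b) - cnt L.flatten a2,
          by have := cnt_mono L.flatten (show a2 ≤ a2 + b by omega); omega⟩
      -- c2 on L : x.length * R + 1 ≤ b * cnt x x.length + x.length
      have hc2 := c2 L (cnt x x.length) x.length hx.1 hcb' hsl' a2 b (by omega)
      -- boundary : x.length * cnt x i + a1 * cnt x x.length ≤ x.length * cnt x x.length
      have hbd : x.length * cnt x i + a1 * cnt x x.length ≤ x.length * cnt x x.length := by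
        have up_i : x.length * cnt x i ≤ i * cnt x x.length := (hx.2 i (by omega)).1
        have e : i * cnt x x.length + a1 * cnt x x.length = x.length * cnt x x.length := by
          rw [ha1]; ring
        omega
      -- S1 : b * cnt x i + a1 * R ≤ b * cnt x x.length + a1
      have S1 : b * cnt x i + a1 * R ≤ b * cnt x x.length + a1 := by
        have hc2' : x.length * R + 1 ≤ b * cnt x x.length + x.length := by
          have e : x.length * cnt L.flatten (a2 + b)
              = x.length * cnt L.flatten a2 + x.length * R := by rw [hR]; ring
          linarith
        have J1 : b * (x.length * cnt x i) + b * (a1 * cnt x x.length)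
            ≤ b * (x.length * cnt x x.length) := by
          have := Nat.mul_le_mul_left b hbd
          linarith [this]
        have J2 : a1 * (x.length * R) + a1 ≤ a1 * (b * cnt x x.length) + a1 * x.length := by
          have := Nat.mul_le_mul_left a1 hc2'
          have e1 : a1 * (x.length * R + 1) = a1 * (x.length * R) + a1 := by ring
          have e2 : a1 * (b * cnt x x.length + x.length)
              = a1 * (b * cnt x x.length) + a1 * x.length := by ring
          omega
        have key : x.length * (b * cnt x i + a1 * R) + a1
            ≤ x.length * (b * cnt x x.length + a1) := by
          have e3 : x.length * (b * cnt x i + a1 * R)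
              = b * (x.length * cnt x i) + a1 * (x.length * R) := by ring
          have e4 : x.length * (b * cnt x x.length + a1)
              = b * (x.length * cnt x x.length) + a1 * x.length := by ring
          have e5 : b * (a1 * cnt x x.length) = a1 * (b * cnt x x.length) := by ring
          linarith
        have key2 : x.length * (b * cnt x i + a1 * R) ≤ x.length * (b * cnt x x.length + a1) :=
          by omega
        exact Nat.le_of_mul_le_mul_left key2 hx.1
      -- now conclude
      have hih' : a2 * R + 1 ≤ b * cnt L.flatten a2 + a2 + b := by
        have e : a2 * cnt L.flatten (a2 + b) = a2 * cnt L.flatten a2 + a2 * R := by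
          rw [hR]; ring
        have e2 : (a2 + b) * cnt L.flatten a2 = a2 * cnt L.flatten a2 + b * cnt L.flatten a2 := by
          ring
        linarith
      -- goal : b*ci + a*(cx + c'j' + R) + 1 ≤ (a+b)*(cx + c'j') + (a+b)
      have eg1 : a * (cnt x x.length + (cnt L.flatten a2 + R))
          = a * cnt x x.length + a * cnt L.flatten a2 + a1 * R + a2 * R := by
        rw [ha2]; ring
      have eg2 : (a + b) * (cnt x x.length + cnt L.flatten a2)
          = a * cnt x x.length + b * cnt x x.length + a * cnt L.flatten a2
            + b * cnt L.flatten a2 := by ring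
      rw [hR]
      linarith
end S16


namespace S16

lemma qp_drop {w : List Bool} (hQ : Qp w) (K : ℕ) : Qp (w.drop K) := by
  intro i a b ha hb htot
  rw [List.length_drop] at htot
  have h1 : ∀ t, cnt w (K + t) = cnt w K + cnt (w.drop K) t := cnt_add w K
  have hq := hQ (K + i) a b ha hb (by omega)
  rw [show K + i + a = K + (i + a) by ring, show K + (i + a) + b = K + (i + a + b) by ring,
    h1 i, h1 (i + a), h1 (i + a + b)] at hq
  have e1 : b * (cnt w K + cnt (w.drop K) i)
      = b * cnt w K + b * cnt (w.drop K) i := by ring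
  have e2 : a * (cnt w K + cnt (w.drop K) (i + a + b))
      = a * cnt w K + a * cnt (w.drop K) (i + a + b) := by ring
  have e3 : (a + b) * (cnt w K + cnt (w.drop K) (i + a))
      = a * cnt w K + b * cnt w K + (a + b) * cnt (w.drop K) (i + a) := by ring
  linarith

lemma repl_len (g : ℕ) (x : List Bool) : (List.replicate g x).flatten.length = g * x.length := by
  induction g with
  | zero => simp
  | succ g ih =>
    rw [List.replicate_succ, List.flatten_cons, List.length_append, ih]
    ring

lemma cnt_repl {pp qq : ℕ} (hple : pp ≤ qq) (hq0 : 0 < qq) :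
    ∀ (g : ℕ) (j : ℕ), j ≤ g * qq →
      cnt (List.replicate g (chr (qq - pp) pp)).flatten j = j * pp / qq := by
  have hlen : (chr (qq - pp) pp).length = qq := by rw [chr_length]; omega
  have hsum : qq - pp + pp = qq := by omega
  intro g
  induction g with
  | zero => intro j hj; simp at hj; simp [hj]
  | succ g ih =>
    intro j hj
    rw [List.replicate_succ, List.flatten_cons]
    rcases le_or_gt j qq with hc | hc
    · rw [cnt_pre _ _ (by rw [hlen]; exact hc)]
      have := cnt_chr (qq - pp) pp j (by omega)
      rwa [hsum] at this
    · obtain ⟨j', rfl⟩ : ∃ j', j = qq + j' := ⟨j - qq, by omega⟩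
      have hshift := cnt_shift (chr (qq - pp) pp) (List.replicate g (chr (qq - pp) pp)).flatten j'
      rw [hlen] at hshift
      rw [hshift]
      have hcnt_full : cnt (chr (qq - pp) pp) qq = pp := by
        have h1 : cnt (chr (qq - pp) pp) ((qq - pp) + pp) = (chr (qq - pp) pp).count true := by
          conv_lhs => rw [← chr_length (qq - pp) pp]
          exact cnt_len _
        rw [hsum] at h1
        rw [h1, count_chr _ _ (by omega)]
      rw [hcnt_full, ih j' (by
        have : (g + 1) * qq = qq + g * qq := by ring
        omega)]
      have e : (qq + j') * pp = j' * pp + pp * qq := by ring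
      rw [e, Nat.add_mul_div_right _ _ hq0]
      omega

lemma chain_replicate {α : Type*} {r : α → α → Prop} {x : α} (h : r x x) :
    ∀ g, List.Chain' r (List.replicate g x) := by
  intro g
  induction g with
  | zero => exact List.isChain_nil
  | succ g ih =>
    rw [List.replicate_succ]
    apply List.isChain_cons.mpr
    refine ⟨?_, ih⟩
    intro y hy
    have := List.mem_of_mem_head? hy
    rw [List.eq_of_mem_replicate this]
    exact h

/-- existence of the Christoffel factorization for chord-bounded words -/
lemma exists_fact : ∀ n (w : List Bool), w.length ≤ n → Qp w →
    ∃ L : List (ℕ × ℕ),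
      (L.map (fun p => chr p.1 p.2)).flatten = w ∧
      (∀ p ∈ L, Nat.Coprime p.2 (p.1 + p.2) ∧ 0 < p.1 + p.2) ∧
      List.Chain' (fun p q => q.2 * (p.1 + p.2) ≤ p.2 * (q.1 + q.2)) L ∧
      (∀ p ∈ L.head?, ∃ k0, 0 < k0 ∧ k0 ≤ w.length ∧ p.2 * k0 = cnt w k0 * (p.1 + p.2)) := by
  intro n
  induction n using Nat.strong_induction_on with
  | _ n IHn =>
  intro w hwn hQ
  rcases Nat.eq_zero_or_pos w.length with hN0 | hN
  · exact ⟨[], by simpa using (List.length_eq_zero_iff.mp hN0).symm, by simp, List.isChain_nil, by simp⟩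
  have hdec : ∀ k : ℕ, Decidable (∀ k' ∈ Finset.Icc 1 w.length,
      cnt w k' * k ≤ cnt w k * k') := fun k => Finset.decidableDforallFinset
  obtain ⟨k1, hk1mem, hk1max⟩ := Finset.exists_max_image (Finset.Icc 1 w.length)
    (fun k => (cnt w k : ℚ) / k) (⟨1, by simp; omega⟩)
  have hk1maxN : ∀ k' ∈ Finset.Icc 1 w.length, cnt w k' * k1 ≤ cnt w k1 * k' := by
    intro k' hk'
    have h1 := hk1max k' hk'
    rw [Finset.mem_Icc] at hk' hk1mem
    rw [div_le_div_iff₀ (by exact_mod_cast Nat.lt_of_lt_of_le Nat.zero_lt_one hk'.1)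
      (by exact_mod_cast Nat.lt_of_lt_of_le Nat.zero_lt_one hk1mem.1)] at h1
    exact_mod_cast h1
  have hTne : ((Finset.Icc 1 w.length).filter
      (fun k => ∀ k' ∈ Finset.Icc 1 w.length, cnt w k' * k ≤ cnt w k * k')).Nonempty :=
    ⟨k1, Finset.mem_filter.mpr ⟨hk1mem, hk1maxN⟩⟩
  obtain ⟨K, hKT, hKgr⟩ := Finset.exists_max_image _ (fun k => k) hTne
  have hKmem : K ∈ Finset.Icc 1 w.length := (Finset.mem_filter.mp hKT).1
  have hK1 : 1 ≤ K := (Finset.mem_Icc.mp hKmem).1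
  have hKN : K ≤ w.length := (Finset.mem_Icc.mp hKmem).2
  have hmaxN : ∀ k', 1 ≤ k' → k' ≤ w.length → cnt w k' * K ≤ cnt w K * k' := by
    intro k' h1 h2
    exact (Finset.mem_filter.mp hKT).2 k' (Finset.mem_Icc.mpr ⟨h1, h2⟩)
  have htopN : ∀ k', K < k' → k' ≤ w.length → cnt w k' * K < cnt w K * k' := by
    intro k' h1 h2
    have hnotT : k' ∉ (Finset.Icc 1 w.length).filter
        (fun k => ∀ k'' ∈ Finset.Icc 1 w.length, cnt w k'' * k ≤ cnt w k * k'') := by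
      intro hmem
      have := hKgr k' hmem
      have := this
      omega
    rw [Finset.mem_filter] at hnotT
    push_neg at hnotT
    obtain ⟨k'', hk''mem, hk''⟩ := hnotT (Finset.mem_Icc.mpr ⟨by omega, h2⟩)
    rw [Finset.mem_Icc] at hk''mem
    -- cnt w k' * k'' < cnt w k'' * k' , and cnt w k'' * K ≤ cnt w K * k''
    have hmax'' : cnt w k'' * K ≤ cnt w K * k'' := hmaxN k'' hk''mem.1 hk''mem.2
    have hk''0 : 0 < k'' := hk''mem.1
    have key : (cnt w k' * K) * k'' < (cnt w K * k') * k'' := by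
      calc (cnt w k' * K) * k'' = (cnt w k' * k'') * K := by ring
      _ < (cnt w k'' * k') * K := by
          exact Nat.mul_lt_mul_of_lt_of_le hk'' (le_refl K) (by omega)
      _ = (cnt w k'' * K) * k' := by ring
      _ ≤ (cnt w K * k'') * k' := Nat.mul_le_mul_right _ hmax''
      _ = (cnt w K * k') * k'' := by ring
    exact Nat.lt_of_mul_lt_mul_right key
  -- gcd decomposition
  have hg : 0 < Nat.gcd (cnt w K) K := Nat.gcd_pos_of_pos_right _ (by omega)
  set g := Nat.gcd (cnt w K) K with hgdef
  set pp := cnt w K / g with hppdef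
  set qq := K / g with hqqdef
  have hppg : pp * g = cnt w K := Nat.div_mul_cancel (Nat.gcd_dvd_left _ _)
  have hqqg : qq * g = K := Nat.div_mul_cancel (Nat.gcd_dvd_right _ _)
  have hco : Nat.Coprime pp qq := Nat.coprime_div_gcd_div_gcd hg
  have hqq0 : 0 < qq := by
    rcases Nat.eq_zero_or_pos qq with h0 | h
    · rw [h0] at hqqg; simp at hqqg; omega
    · exact h
  have hple : pp ≤ qq := by
    have h1 : cnt w K ≤ K := cnt_le w K
    rw [← hppg, ← hqqg] at h1
    exact Nat.le_of_mul_le_mul_right h1 hg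
  -- prefix counts
  have hpre : ∀ j, j ≤ K → cnt w j = j * cnt w K / K := by
    intro j hj
    rcases Nat.eq_zero_or_pos j with rfl | hj1
    · simp
    rcases Nat.eq_or_lt_of_le hj with rfl | hjK
    · rw [Nat.mul_comm, Nat.mul_div_cancel _ (by omega)]
    have hup : cnt w j ≤ j * cnt w K / K := by
      rw [Nat.le_div_iff_mul_le (by omega)]
      calc cnt w j * K ≤ cnt w K * j := hmaxN j hj1 (by omega)
      _ = j * cnt w K := by ring
    have hlo : j * cnt w K / K ≤ cnt w j := by
      by_contra hcon
      push_neg at hcon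
      have h2 : K * (cnt w j + 1) ≤ K * (j * cnt w K / K) :=
        Nat.mul_le_mul_left _ (by omega)
      have h3 : K * (j * cnt w K / K) ≤ j * cnt w K := by
        rw [Nat.mul_comm]
        exact Nat.div_mul_le_self _ _
      have hq := hQ 0 j (K - j) hj1 (by omega) (by omega)
      rw [show 0 + j + (K - j) = K by omega, show 0 + j = j by omega] at hq
      simp only [cnt_zero, Nat.mul_zero] at hq
      have e : K * (cnt w j + 1) = K * cnt w j + K := by ring
      have e2 : (j + (K - j)) = K := by omega
      rw [e2] at hq
      linarith
    omega
  -- the prefix of length K is a power of a Christoffel word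
  have htake : w.take K = (List.replicate g (chr (qq - pp) pp)).flatten := by
    apply eq_of_cnt
    · rw [List.length_take, repl_len, chr_length]
      have e : qq - pp + pp = qq := by omega
      rw [e]
      have hgq : g * qq = K := by rw [Nat.mul_comm]; exact hqqg
      omega
    · intro j hj
      rw [List.length_take] at hj
      have hjK : j ≤ K := by omega
      rw [cnt_take w K j hjK, cnt_repl hple hqq0 g j (by rw [Nat.mul_comm] at hqqg; omega)]
      rw [hpre j hjK]
      -- j * cnt w K / K = j * pp / qq
      rw [← hppg, ← hqqg]
      have e1 : j * (pp * g) = (j * pp) * g := by ring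
      rw [e1, Nat.mul_div_mul_right _ _ hg]
  -- the tail
  have hQ' : Qp (w.drop K) := qp_drop hQ K
  have hlen' : (w.drop K).length < n := by
    rw [List.length_drop]
    omega
  obtain ⟨L', hfl', hco', hch', hhd'⟩ := IHn (w.drop K).length hlen' (w.drop K) le_rfl hQ'
  -- strict slope decrease for the tail
  have hstrict : ∀ k0, 0 < k0 → k0 ≤ (w.drop K).length →
      cnt (w.drop K) k0 * qq < pp * k0 := by
    intro k0 h1 h2
    rw [List.length_drop] at h2
    have htop := htopN (K + k0) (by omega) (by omega)
    have hadd : cnt w (K + k0) = cnt w K + cnt (w.drop K) k0 := cnt_add w K k0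
    have hKK : cnt (w.drop K) k0 * K < cnt w K * k0 := by
      have e1 : (cnt w K + cnt (w.drop K) k0) * K = cnt w K * K + cnt (w.drop K) k0 * K := by
        ring
      have e2 : cnt w K * (K + k0) = cnt w K * K + cnt w K * k0 := by ring
      rw [hadd] at htop
      linarith
    -- divide by g
    have hKK2 : (cnt (w.drop K) k0 * qq) * g < (pp * k0) * g := by
      have e3 : (cnt (w.drop K) k0 * qq) * g = cnt (w.drop K) k0 * (qq * g) := by ring
      have e4 : (pp * k0) * g = (pp * g) * k0 := by ring
      rw [e3, e4, hqqg, hppg]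
      exact hKK
    exact Nat.lt_of_mul_lt_mul_right hKK2
  refine ⟨List.replicate g (qq - pp, pp) ++ L', ?_, ?_, ?_, ?_⟩
  · rw [List.map_append, List.map_replicate, List.flatten_append, ← htake, hfl',
      List.take_append_drop]
  · intro pq hpq
    rcases List.mem_append.mp hpq with hmem | hmem
    · have := List.eq_of_mem_replicate hmem
      subst this
      have e : qq - pp + pp = qq := by omega
      simp only
      rw [e]
      exact ⟨hco, hqq0⟩
    · exact hco' pq hmem
  · rw [List.Chain', List.isChain_append]
    refine ⟨chain_replicate ?_ g, hch', ?_⟩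
    · exact le_rfl
    intro pq1 hpq1 pq2 hpq2
    have h1 : pq1 = (qq - pp, pp) :=
      List.eq_of_mem_replicate (List.mem_of_mem_getLast? hpq1)
    subst h1
    obtain ⟨k0, hk01, hk02, hk0e⟩ := hhd' pq2 hpq2
    have hpq2mem : pq2 ∈ L' := List.mem_of_mem_head? hpq2
    have hpos2 : 0 < pq2.1 + pq2.2 := (hco' pq2 hpq2mem).2
    have hstr := hstrict k0 hk01 hk02
    simp only
    have e : qq - pp + pp = qq := by omega
    rw [e]
    -- pq2.2 * qq ≤ pp * (pq2.1 + pq2.2)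
    have key : (pq2.2 * qq) * k0 ≤ (pp * (pq2.1 + pq2.2)) * k0 := by
      calc (pq2.2 * qq) * k0 = (pq2.2 * k0) * qq := by ring
      _ = (cnt (w.drop K) k0 * (pq2.1 + pq2.2)) * qq := by rw [hk0e]
      _ = (cnt (w.drop K) k0 * qq) * (pq2.1 + pq2.2) := by ring
      _ ≤ (pp * k0) * (pq2.1 + pq2.2) := Nat.mul_le_mul_right _ (le_of_lt hstr)
      _ = (pp * (pq2.1 + pq2.2)) * k0 := by ring
    exact Nat.le_of_mul_le_mul_right key hk01
  · intro pq hpq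
    have hg' : List.replicate g (qq - pp, pp) = (qq - pp, pp) :: List.replicate (g - 1) (qq - pp, pp) := by
      conv_lhs => rw [show g = (g - 1) + 1 by omega]
      rw [List.replicate_succ]
    rw [hg', List.cons_append, List.head?_cons] at hpq
    have : pq = (qq - pp, pp) := by
      simp at hpq
      exact hpq.symm
    subst this
    refine ⟨K, by omega, hKN, ?_⟩
    simp only
    have e : qq - pp + pp = qq := by omega
    rw [e, ← hppg, ← hqqg]
    ring

end S16


namespace S16

lemma chain_notlex : ∀ (L : List (ℕ × ℕ)),
    (∀ p ∈ L, Nat.Coprime p.2 (p.1 + p.2) ∧ 0 < p.1 + p.2) →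
    List.Chain' (fun p q => q.2 * (p.1 + p.2) ≤ p.2 * (q.1 + q.2)) L →
    List.Chain' (fun a b => ¬ List.Lex (· < ·) a b) (L.map (fun p => chr p.1 p.2)) := by
  intro L
  induction L with
  | nil => intro _ _; exact List.isChain_nil
  | cons x L ih =>
    intro hall hch
    rcases List.isChain_cons.mp hch with ⟨hhd, htl⟩
    rw [List.map_cons]
    apply List.isChain_cons.mpr
    refine ⟨?_, ih (fun p hp => hall p (List.mem_cons_of_mem _ hp)) htl⟩
    intro y hy
    rcases L with _ | ⟨z, L⟩
    · simp at hy
    · rw [List.map_cons, List.head?_cons] at hy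
      simp at hy
      subst hy
      have hx := hall x (by simp)
      have hz := hall z (by simp)
      exact notlex_chr hx.1 hz.1 hx.2 hz.2 (hhd z rfl)

end S16



/-- The meet (w.r.t. the dominance order) of two digitally convex words of the
same length is digitally convex. -/
theorem stmt16 (u v w : List Bool) (hu : DC u) (hv : DC v)
    (hlen : u.length = v.length) (hwlen : w.length = u.length)
    (hmeet : ∀ i : ℕ,
      (w.take i).count true = min ((u.take i).count true) ((v.take i).count true)) :
    DC w := by

  obtain ⟨Lu, hLuf, hLufacts, hLuch⟩ := hu
  obtain ⟨Lv, hLvf, hLvfacts, hLvch⟩ := hv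
  have hcbu : ∀ x ∈ Lu, S16.CBp x := fun x hx =>
    S16.cbp_of (hLufacts x hx).1 (hLufacts x hx).2
  have hcbv : ∀ x ∈ Lv, S16.CBp x := fun x hx =>
    S16.cbp_of (hLvfacts x hx).1 (hLvfacts x hx).2
  have hQu : S16.Qp u := by
    rw [← hLuf]
    exact S16.ql Lu hcbu (S16.chain_pairwise hcbu hLuch)
  have hQv : S16.Qp v := by
    rw [← hLvf]
    exact S16.ql Lv hcbv (S16.chain_pairwise hcbv hLvch)
  have hcw : ∀ t, S16.cnt w t = min (S16.cnt u t) (S16.cnt v t) := fun t => hmeet t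
  have hQw : S16.Qp w := by
    intro i a b ha hb htot
    rw [hwlen] at htot
    rcases le_total (S16.cnt u (i + a)) (S16.cnt v (i + a)) with h | h
    · have hj : S16.cnt w (i + a) = S16.cnt u (i + a) := by rw [hcw]; omega
      have hq := hQu i a b ha hb htot
      have hi : S16.cnt w i ≤ S16.cnt u i := by rw [hcw]; omega
      have hk : S16.cnt w (i + a + b) ≤ S16.cnt u (i + a + b) := by rw [hcw]; omega
      rw [hj]
      have m1 : b * S16.cnt w i ≤ b * S16.cnt u i := Nat.mul_le_mul_left _ hi
      have m2 : a * S16.cnt w (i + a + b) ≤ a * S16.cnt u (i + a + b) :=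
        Nat.mul_le_mul_left _ hk
      linarith
    · have hj : S16.cnt w (i + a) = S16.cnt v (i + a) := by rw [hcw]; omega
      have hq := hQv i a b ha hb (by rw [← hlen]; exact htot)
      have hi : S16.cnt w i ≤ S16.cnt v i := by rw [hcw]; omega
      have hk : S16.cnt w (i + a + b) ≤ S16.cnt v (i + a + b) := by rw [hcw]; omega
      rw [hj]
      have m1 : b * S16.cnt w i ≤ b * S16.cnt v i := Nat.mul_le_mul_left _ hi
      have m2 : a * S16.cnt w (i + a + b) ≤ a * S16.cnt v (i + a + b) :=
        Nat.mul_le_mul_left _ hk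
      linarith
  obtain ⟨L, hfl, hconds, hch, -⟩ := S16.exists_fact w.length w le_rfl hQw
  refine ⟨L.map (fun p => chr p.1 p.2), hfl, ?_, S16.chain_notlex L hconds hch⟩
  intro x hx
  obtain ⟨p, hp, rfl⟩ := List.mem_map.mp hx
  exact ⟨S16.lyndon_chr (hconds p hp).1 (hconds p hp).2, S16.balanced_chr p.1 p.2⟩
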